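/- arXiv:1105.5085 — 5 statements merged into one kernel-verified Lean document; each statement's English description precedes it below -/
import Mathlib

section
/- Let g : [0,1] → ℝ be the indicator function of the interval [e^{−1}, 1]. Then for every ε > 0 there exists a real polynomial q such that q(0) = 0, q(x) ≥ g(x) for all x ∈ [0,1], and ∫_0^1 (q(x) − g(x)) x^{−3/2} dx < ε. -/
open MeasureTheory Set

set_option maxHeartbeats 1000000 in
/-- Polynomial approximation from above of the indicator function
`g = 1_{[e^{-1},1]}` with small weighted error: for every `ε > 0` there is a real
polynomial `q` with `q(0) = 0`, `q ≥ g` on `[0,1]`, and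
`∫_0^1 (q(x) − g(x)) x^{-3/2} dx < ε`. -/
theorem stmt4 :
    ∀ ε > (0:ℝ), ∃ q : Polynomial ℝ,
      q.eval 0 = 0 ∧
      (∀ x ∈ Set.Icc (0:ℝ) 1,
        Set.indicator (Set.Icc (Real.exp (-1)) 1) (fun _ => (1:ℝ)) x ≤ q.eval x) ∧
      (∫ x in Set.Ioc (0:ℝ) 1,
          (q.eval x - Set.indicator (Set.Icc (Real.exp (-1)) 1) (fun _ => (1:ℝ)) x)
            * x ^ (-(3 / 2 : ℝ))) < ε := by
  intro ε hε
  set c : ℝ := Real.exp (-1) with hc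
  have hc0 : 0 < c := Real.exp_pos _
  have hc1 : c < 1 := by
    rw [hc, show (1:ℝ) = Real.exp 0 by simp]
    exact Real.exp_lt_exp.mpr (by norm_num)
  have hce : c * Real.exp 1 = 1 := by rw [hc, ← Real.exp_add]; norm_num
  set K : ℝ := (c / 2) ^ (-(3 / 2) : ℝ) with hKdef
  have hK0 : 0 < K := Real.rpow_pos_of_pos (by linarith) _
  set δ : ℝ := min (c / 2) (ε / (4 * K)) with hδdef
  have hδ0 : 0 < δ := lt_min (by linarith) (by positivity)
  have hδc : δ ≤ c / 2 := min_le_left _ _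
  set a : ℝ := c - δ with hadef
  have ha2 : c / 2 ≤ a := by rw [hadef]; linarith
  have ha0 : 0 < a := by linarith
  have hac : a < c := by rw [hadef]; linarith
  set η : ℝ := ε / 8 with hηdef
  have hη0 : 0 < η := by positivity
  set g : ℝ → ℝ := Set.indicator (Set.Icc c 1) (fun _ => (1:ℝ)) with hg
  set f : ℝ → ℝ := fun x => max 0 (min ((x - a) / δ * Real.exp 1) (1 / max x c)) with hf
  have hfc : ContinuousOn f (Icc (0:ℝ) 1) := by
    apply Continuous.continuousOn
    refine continuous_const.max (Continuous.min (by continuity) ?_)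
    exact continuous_const.div (continuous_id.max continuous_const)
      (fun x => ne_of_gt (lt_of_lt_of_le hc0 (le_max_right _ _)))
  have hf0 : ∀ x, 0 ≤ f x := fun x => le_max_left _ _
  have hfub : ∀ x, f x ≤ 1 / max x c := by
    intro x
    have hm : (0:ℝ) < max x c := lt_of_lt_of_le hc0 (le_max_right _ _)
    exact max_le (by positivity) (min_le_right _ _)
  have hfx1 : ∀ x ∈ Icc (0:ℝ) 1, x * f x ≤ 1 := by
    intro x hx
    have hm : (0:ℝ) < max x c := lt_of_lt_of_le hc0 (le_max_right _ _)
    calc x * f x ≤ max x c * (1 / max x c) :=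
          mul_le_mul (le_max_left _ _) (hfub x) (hf0 x) hm.le
      _ = 1 := by field_simp
  have hfeq : ∀ x, c ≤ x → f x = 1 / x := by
    intro x hcx
    have hx0 : 0 < x := lt_of_lt_of_le hc0 hcx
    have hmax : max x c = x := max_eq_left hcx
    have h1 : 1 / x ≤ Real.exp 1 := by
      rw [div_le_iff₀ hx0]
      nlinarith [Real.exp_pos 1]
    have h2 : Real.exp 1 ≤ (x - a) / δ * Real.exp 1 := by
      have h3 : (1:ℝ) ≤ (x - a) / δ := by
        rw [le_div_iff₀ hδ0, hadef]; linarith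
      nlinarith [Real.exp_pos 1]
    rw [hf]
    simp only [hmax]
    rw [min_eq_right (le_trans h1 h2), max_eq_right (by positivity : (0:ℝ) ≤ 1 / x)]
  have hfa : ∀ x, x ≤ a → f x = 0 := by
    intro x hxa
    have ht : (x - a) / δ * Real.exp 1 ≤ 0 :=
      mul_nonpos_iff.mpr (Or.inr ⟨div_nonpos_iff.mpr (Or.inr ⟨by linarith, hδ0.le⟩), (Real.exp_pos 1).le⟩)
    rw [hf]
    exact max_eq_left (le_trans (min_le_left _ _) ht)
  obtain ⟨p, hp⟩ := exists_polynomial_near_of_continuousOn 0 1 (fun x => f x + η)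
      (hfc.add continuousOn_const) η hη0
  have hpf : ∀ x ∈ Icc (0:ℝ) 1, f x ≤ p.eval x ∧ p.eval x ≤ f x + 2 * η := by
    intro x hx
    have h := abs_lt.mp (hp x hx)
    exact ⟨by linarith [h.1], by linarith [h.2]⟩
  have hlb : ∀ x ∈ Set.Icc (0:ℝ) 1,
      g x ≤ (Polynomial.X * p).eval x := by
    intro x hx
    simp only [Polynomial.eval_mul, Polynomial.eval_X]
    by_cases hxc : x ∈ Set.Icc c 1
    · rw [hg, Set.indicator_of_mem hxc]
      have hx0 : 0 < x := lt_of_lt_of_le hc0 hxc.1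
      calc (1:ℝ) = x * (1 / x) := by field_simp
        _ = x * f x := by rw [hfeq x hxc.1]
        _ ≤ x * p.eval x := mul_le_mul_of_nonneg_left (hpf x hx).1 hx0.le
    · rw [hg, Set.indicator_of_notMem hxc]
      exact mul_nonneg hx.1 (le_trans (hf0 x) (hpf x hx).1)
  refine ⟨Polynomial.X * p, by simp, hlb, ?_⟩
  set h : ℝ → ℝ := fun x => 2 * η * x ^ (-(1/2) : ℝ) +
      Set.indicator (Set.Ioc a c) (fun _ => K) x with hh
  have hint1 : IntegrableOn (fun x : ℝ => x ^ (-(1/2) : ℝ)) (Set.Ioc (0:ℝ) 1) := by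
    have := intervalIntegral.intervalIntegrable_rpow' (r := -(1/2)) (a := 0) (b := 1) (by norm_num)
    rw [intervalIntegrable_iff, uIoc_of_le (zero_le_one)] at this
    exact this
  have hint2 : IntegrableOn (fun x : ℝ => Set.indicator (Set.Ioc a c) (fun _ => K) x)
      (Set.Ioc (0:ℝ) 1) :=
    (integrableOn_const measure_Ioc_lt_top.ne).indicator measurableSet_Ioc
  have hint : IntegrableOn h (Set.Ioc (0:ℝ) 1) := (hint1.const_mul _).add hint2
  have hbound : ∀ x ∈ Set.Ioc (0:ℝ) 1,
      ((Polynomial.X * p).eval x - g x) * x ^ (-(3 / 2 : ℝ)) ≤ h x := by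
    intro x hx
    have hx0 : 0 < x := hx.1
    have hx1 : x ≤ 1 := hx.2
    have hw0 : 0 ≤ x ^ (-(3 / 2 : ℝ)) := Real.rpow_nonneg hx0.le _
    have hpx := (hpf x ⟨hx0.le, hx1⟩).2
    have hind0 : (0:ℝ) ≤ Set.indicator (Set.Ioc a c) (fun _ => (1:ℝ)) x :=
      Set.indicator_nonneg (fun _ _ => zero_le_one) x
    have stepA : (Polynomial.X * p).eval x - g x ≤
        2 * η * x + Set.indicator (Set.Ioc a c) (fun _ => (1:ℝ)) x := by
      simp only [Polynomial.eval_mul, Polynomial.eval_X]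
      have hxp : x * p.eval x ≤ x * f x + 2 * η * x := by nlinarith
      by_cases hcx : c ≤ x
      · have hgx : g x = 1 := by rw [hg]; exact Set.indicator_of_mem (Set.mem_Icc.mpr ⟨hcx, hx1⟩) _
        have hxf : x * f x = 1 := by rw [hfeq x hcx]; field_simp
        rw [hgx]; linarith
      · have hgx : g x = 0 := by rw [hg]; exact Set.indicator_of_notMem (fun h' => hcx h'.1) _
        rw [hgx]
        by_cases hax : a < x
        · have hmem : x ∈ Set.Ioc a c := ⟨hax, le_of_not_ge hcx⟩
          rw [Set.indicator_of_mem hmem]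
          have := hfx1 x ⟨hx0.le, hx1⟩
          linarith
        · have hxf : f x = 0 := hfa x (le_of_not_gt hax)
          rw [hxf] at hxp
          linarith
    have hxw : x * x ^ (-(3 / 2 : ℝ)) = x ^ (-(1/2) : ℝ) := by
      calc x * x ^ (-(3 / 2 : ℝ)) = x ^ (1:ℝ) * x ^ (-(3 / 2 : ℝ)) := by rw [Real.rpow_one]
        _ = x ^ ((1:ℝ) + -(3/2)) := (Real.rpow_add hx0 _ _).symm
        _ = x ^ (-(1/2) : ℝ) := by norm_num
    have hindw : Set.indicator (Set.Ioc a c) (fun _ => (1:ℝ)) x * x ^ (-(3 / 2 : ℝ)) ≤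
        Set.indicator (Set.Ioc a c) (fun _ => K) x := by
      by_cases hm : x ∈ Set.Ioc a c
      · rw [Set.indicator_of_mem hm, Set.indicator_of_mem hm, one_mul, hKdef]
        exact Real.rpow_le_rpow_of_nonpos (by linarith) (by linarith [hm.1]) (by norm_num)
      · rw [Set.indicator_of_notMem hm, Set.indicator_of_notMem hm, zero_mul]
    calc ((Polynomial.X * p).eval x - g x) * x ^ (-(3 / 2 : ℝ))
        ≤ (2 * η * x + Set.indicator (Set.Ioc a c) (fun _ => (1:ℝ)) x) * x ^ (-(3 / 2 : ℝ)) :=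
          mul_le_mul_of_nonneg_right stepA hw0
      _ = 2 * η * (x * x ^ (-(3 / 2 : ℝ))) +
          Set.indicator (Set.Ioc a c) (fun _ => (1:ℝ)) x * x ^ (-(3 / 2 : ℝ)) := by ring
      _ ≤ 2 * η * x ^ (-(1/2) : ℝ) + Set.indicator (Set.Ioc a c) (fun _ => K) x := by
          rw [hxw]; linarith
      _ = h x := by rw [hh]
  have hnn : ∀ x ∈ Set.Ioc (0:ℝ) 1,
      0 ≤ ((Polynomial.X * p).eval x - g x) * x ^ (-(3 / 2 : ℝ)) := by
    intro x hx
    exact mul_nonneg (sub_nonneg.mpr (hlb x ⟨hx.1.le, hx.2⟩)) (Real.rpow_nonneg hx.1.le _)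
  have hI1 : (∫ x in Set.Ioc (0:ℝ) 1, x ^ (-(1/2) : ℝ)) = 2 := by
    rw [← intervalIntegral.integral_of_le zero_le_one,
        integral_rpow (Or.inl (by norm_num))]
    rw [Real.one_rpow, Real.zero_rpow (by norm_num)]
    norm_num
  have hI2 : (∫ x in Set.Ioc (0:ℝ) 1, Set.indicator (Set.Ioc a c) (fun _ => K) x) = K * δ := by
    rw [setIntegral_indicator measurableSet_Ioc,
        Set.inter_eq_right.mpr (Set.Ioc_subset_Ioc ha0.le hc1.le),
        setIntegral_const, Real.volume_real_Ioc_of_le hac.le]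
    rw [smul_eq_mul, hadef]; ring
  have hIh : (∫ x in Set.Ioc (0:ℝ) 1, h x) = 4 * η + K * δ := by
    rw [hh]
    rw [integral_add (hint1.const_mul _) hint2, integral_const_mul, hI1, hI2]
    ring
  have hKδ : K * δ ≤ ε / 4 := by
    have h1 : δ ≤ ε / (4 * K) := min_le_right _ _
    calc K * δ ≤ K * (ε / (4 * K)) := by nlinarith
      _ = ε / 4 := by field_simp
  calc (∫ x in Set.Ioc (0:ℝ) 1, ((Polynomial.X * p).eval x - g x) * x ^ (-(3 / 2 : ℝ)))
      ≤ ∫ x in Set.Ioc (0:ℝ) 1, h x := by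
        apply integral_mono_of_nonneg
        · exact (ae_restrict_iff' measurableSet_Ioc).mpr (ae_of_all _ hnn)
        · exact hint
        · exact (ae_restrict_iff' measurableSet_Ioc).mpr (ae_of_all _ hbound)
    _ = 4 * η + K * δ := hIh
    _ < ε := by rw [hηdef]; linarith
end

section
/- Let β ∈ (0,1), and fix u > 0 and θ ∈ ℝ with θ ≠ 0. Then there is a constant C > 0 (which may depend on β, u, θ) such that for all R ≥ 1: |∫_0^R e^{−(u−iθ)x} ((u−iθ)x)^{−β} (u−iθ) dx − Γ(1−β)| ≤ C R^{−β}. -/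
open Complex Real MeasureTheory Set Filter Metric

lemma stmt12_mul_cpow (w : ℂ) (hw : w ≠ 0) {x : ℝ} (hx : 0 < x) (s : ℂ) :
    (w * (x:ℂ)) ^ s = w ^ s * (x:ℂ) ^ s := by
  have hx0 : (x:ℂ) ≠ 0 := by exact_mod_cast hx.ne'
  rw [Complex.cpow_def_of_ne_zero (mul_ne_zero hw hx0),
    Complex.log_mul_ofReal x hx w hw, add_mul, Complex.exp_add,
    Complex.cpow_def_of_ne_zero hw, Complex.cpow_def_of_ne_zero hx0,
    ← Complex.ofReal_log hx.le]
  ring_nf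

lemma stmt12_meas {β : ℝ} (z : ℂ) :
    AEStronglyMeasurable (fun x : ℝ => Complex.exp (-z * x) * (x:ℂ) ^ (-(β:ℂ)))
      (volume.restrict (Ioi 0)) := by
  refine ContinuousOn.aestronglyMeasurable ?_ measurableSet_Ioi
  refine ((Complex.continuous_exp.comp (by fun_prop)).continuousOn).mul ?_
  refine ContinuousOn.cpow Complex.continuous_ofReal.continuousOn continuousOn_const ?_
  intro x hx
  exact Or.inl (by simpa using (mem_Ioi.mp hx))

lemma stmt12_norm {β : ℝ} (z : ℂ) {x : ℝ} (hx : 0 < x) :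
    ‖Complex.exp (-z * x) * (x:ℂ) ^ (-(β:ℂ))‖ = Real.exp (-z.re * x) * x ^ (-β) := by
  rw [norm_mul, Complex.norm_exp,
    Complex.norm_cpow_eq_rpow_re_of_pos hx]
  congr 2 <;> simp

lemma stmt12_integrable {β : ℝ} (hβ1 : β < 1) {c : ℝ} (hc : 0 < c) (z : ℂ)
    (hz : c ≤ z.re) :
    IntegrableOn (fun x : ℝ => Complex.exp (-z * x) * (x:ℂ) ^ (-(β:ℂ))) (Ioi 0) := by
  have hg : IntegrableOn (fun x : ℝ => x ^ (-β) * Real.exp (-c * x)) (Ioi 0) := by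
    have := integrableOn_rpow_mul_exp_neg_mul_rpow (by linarith : (-1:ℝ) < -β) zero_lt_one hc
    simpa [Real.rpow_one] using this
  refine Integrable.mono' hg (stmt12_meas z) ?_
  rw [ae_restrict_iff' measurableSet_Ioi]
  refine Eventually.of_forall fun x hx => ?_
  have hx' : 0 < x := mem_Ioi.mp hx
  rw [stmt12_norm z hx', mul_comm]
  gcongr

lemma stmt12_real {β : ℝ} (hβ1 : β < 1) {c : ℝ} (hc : 0 < c) :
    ∫ x : ℝ in Ioi 0, Complex.exp (-(c:ℂ) * x) * (x:ℂ) ^ (-(β:ℂ))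
      = (c:ℂ) ^ ((β:ℂ) - 1) * (Real.Gamma (1 - β) : ℂ) := by
  have ha : (0:ℝ) < (((1 - β : ℝ):ℂ)).re := by simpa using by linarith
  have h := Complex.integral_cpow_mul_exp_neg_mul_Ioi ha hc
  have hme : (((1 - β : ℝ):ℂ) - 1) = -(β:ℂ) := by push_cast; ring
  rw [hme] at h
  have h2 : ∫ x : ℝ in Ioi 0, Complex.exp (-(c:ℂ) * x) * (x:ℂ) ^ (-(β:ℂ))
      = (1 / (c:ℂ)) ^ ((1 - β : ℝ):ℂ) * Complex.Gamma ((1 - β : ℝ):ℂ) := by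
    rw [← h]
    refine setIntegral_congr_fun measurableSet_Ioi fun x hx => ?_
    rw [mul_comm, neg_mul]
  rw [h2, Complex.Gamma_ofReal]
  congr 1
  rw [one_div, Complex.inv_cpow _ _
    (by rw [Complex.arg_ofReal_of_nonneg hc.le]; exact Real.pi_ne_zero.symm),
    ← Complex.cpow_neg]
  congr 1
  push_cast; ring

lemma stmt12_diff {β : ℝ} (hβ0 : 0 < β) (hβ1 : β < 1) (z₀ : ℂ) (hz₀ : 0 < z₀.re) :
    DifferentiableAt ℂ
      (fun z : ℂ => ∫ x : ℝ in Ioi 0, Complex.exp (-z * x) * (x:ℂ) ^ (-(β:ℂ))) z₀ := by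
  set ε := z₀.re / 2 with hε
  have hεpos : 0 < ε := half_pos hz₀
  have key := hasDerivAt_integral_of_dominated_loc_of_deriv_le (μ := volume.restrict (Ioi 0))
    (F := fun z x => Complex.exp (-z * x) * (x:ℂ) ^ (-(β:ℂ)))
    (F' := fun z x => Complex.exp (-z * x) * (-(x:ℂ)) * (x:ℂ) ^ (-(β:ℂ)))
    (x₀ := z₀) (s := ball z₀ ε)
    (bound := fun x : ℝ => x ^ (1 - β) * Real.exp (-ε * x)) (ball_mem_nhds z₀ hεpos)
    (Eventually.of_forall fun z => stmt12_meas z)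
    (stmt12_integrable hβ1 hz₀ z₀ le_rfl) ?_ ?_ ?_ ?_
  · exact key.2.differentiableAt
  · refine ContinuousOn.aestronglyMeasurable ?_ measurableSet_Ioi
    refine ContinuousOn.mul (ContinuousOn.mul
      ((Complex.continuous_exp.comp (by fun_prop)).continuousOn) (by fun_prop)) ?_
    refine ContinuousOn.cpow Complex.continuous_ofReal.continuousOn continuousOn_const ?_
    intro x hx
    exact Or.inl (by simpa using (mem_Ioi.mp hx))
  · rw [ae_restrict_iff' measurableSet_Ioi]
    refine Eventually.of_forall fun x hx => ?_
    intro z hz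
    have hx' : 0 < x := mem_Ioi.mp hx
    have hzre : ε ≤ z.re := by
      have h2 := mem_ball_iff_norm.mp hz
      have h3 : |(z - z₀).re| < ε := lt_of_le_of_lt (Complex.abs_re_le_norm _) h2
      rw [Complex.sub_re] at h3
      have h4 := abs_lt.mp h3
      have : z₀.re / 2 ≤ z.re := by linarith [h4.1]
      simpa [hε] using this
    have e1 : (-z * (x:ℂ)).re = -z.re * x := by simp
    have e4 : ‖(x:ℂ) ^ (-(β:ℂ))‖ = x ^ (-β) := by
      rw [Complex.norm_cpow_eq_rpow_re_of_pos hx']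
      norm_num
    have e3 : ‖(-(x:ℂ))‖ = x := by
      rw [norm_neg, Complex.norm_of_nonneg hx'.le]
    have e5 : x ^ (1 - β) = x * x ^ (-β) := by
      rw [show (1:ℝ) - β = 1 + -β by ring, Real.rpow_add hx', Real.rpow_one]
    rw [norm_mul, norm_mul, Complex.norm_exp, e1, e3, e4]
    show Real.exp (-z.re * x) * x * x ^ (-β) ≤ x ^ (1 - β) * Real.exp (-ε * x)
    calc Real.exp (-z.re * x) * x * x ^ (-β)
        = (x * x ^ (-β)) * Real.exp (-z.re * x) := by ring
      _ ≤ (x * x ^ (-β)) * Real.exp (-ε * x) := by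
          have : -z.re * x ≤ -ε * x := by nlinarith
          have hxb : (0:ℝ) ≤ x * x ^ (-β) := by positivity
          exact mul_le_mul_of_nonneg_left (Real.exp_le_exp.mpr this) hxb
      _ = x ^ (1 - β) * Real.exp (-ε * x) := by rw [e5]
  · have := integrableOn_rpow_mul_exp_neg_mul_rpow (by linarith : (-1:ℝ) < 1 - β) zero_lt_one hεpos
    simpa [Real.rpow_one] using this.integrable
  · refine Eventually.of_forall fun x => fun z hz => ?_
    have h1 : HasDerivAt (fun z : ℂ => -z * (x:ℂ)) (-(x:ℂ)) z := by
      simpa using ((hasDerivAt_id z).neg.mul_const (x:ℂ))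
    exact (h1.cexp.mul_const _)

lemma stmt12_key {β : ℝ} (hβ0 : 0 < β) (hβ1 : β < 1) (w : ℂ) (hw : 0 < w.re) :
    ∫ x : ℝ in Ioi 0, Complex.exp (-w * x) * (x:ℂ) ^ (-(β:ℂ))
      = w ^ ((β:ℂ) - 1) * (Real.Gamma (1 - β) : ℂ) := by
  set U : Set ℂ := {z : ℂ | 0 < z.re} with hU
  set f : ℂ → ℂ := fun z => ∫ x : ℝ in Ioi 0, Complex.exp (-z * x) * (x:ℂ) ^ (-(β:ℂ)) with hf
  set g : ℂ → ℂ := fun z => z ^ ((β:ℂ) - 1) * (Real.Gamma (1 - β) : ℂ) with hg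
  have hUopen : IsOpen U := isOpen_lt continuous_const Complex.continuous_re
  have hUpre : IsPreconnected U := (convex_halfSpace_re_gt 0).isPreconnected
  have hfa : AnalyticOnNhd ℂ f U := by
    refine DifferentiableOn.analyticOnNhd (fun z hz => ?_) hUopen
    exact (stmt12_diff hβ0 hβ1 z hz).differentiableWithinAt
  have hga : AnalyticOnNhd ℂ g U := by
    refine DifferentiableOn.analyticOnNhd (fun z hz => ?_) hUopen
    exact ((differentiableAt_id.cpow (differentiableAt_const _)
      (Or.inl hz)).mul_const _).differentiableWithinAt
  have h1U : (1:ℂ) ∈ U := by simp [hU]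
  have hfreq : ∃ᶠ z in nhdsWithin (1:ℂ) {(1:ℂ)}ᶜ, f z = g z := by
    have hseq : Tendsto (fun n : ℕ => ((1 + 1/(n+1) : ℝ) : ℂ)) atTop
        (nhdsWithin 1 {(1:ℂ)}ᶜ) := by
      apply tendsto_nhdsWithin_of_tendsto_nhds_of_eventually_within
      · have : Tendsto (fun n : ℕ => (1 + 1/(n+1) : ℝ)) atTop (nhds 1) := by
          have := tendsto_one_div_add_atTop_nhds_zero_nat (𝕜 := ℝ)
          simpa using (tendsto_const_nhds (x := (1:ℝ))).add this
        have h2 := (Complex.continuous_ofReal.tendsto 1).comp this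
        simp only [Function.comp_def] at h2
        exact_mod_cast h2
      · refine Eventually.of_forall fun n => ?_
        simp only [mem_compl_iff, mem_singleton_iff]
        intro h
        have : (1 + 1/(n+1) : ℝ) = 1 := by exact_mod_cast h
        have hpos : (0:ℝ) < 1/(n+1) := by positivity
        linarith
    refine hseq.frequently (Frequently.of_forall fun n => ?_)
    have hcpos : (0:ℝ) < 1 + 1/(n+1) := by positivity
    exact stmt12_real hβ1 hcpos
  have := hfa.eqOn_of_preconnected_of_frequently_eq hga hUpre h1U hfreq
  exact this hw

/-- For `β ∈ (0,1)` and fixed `u > 0`, `θ ≠ 0`, the truncated contour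
integral `∫_0^R e^{-(u-iθ)x} ((u-iθ)x)^{-β} (u-iθ) dx` equals `Γ(1-β) + O(R^{-β})`. -/
theorem stmt12 (β : ℝ) (hβ : β ∈ Set.Ioo (0:ℝ) 1)
    (u θ : ℝ) (hu : 0 < u) (hθ : θ ≠ 0) :
    ∃ C > (0:ℝ), ∀ R : ℝ, 1 ≤ R →
      ‖(∫ x in (0:ℝ)..R,
          Complex.exp (-((u : ℂ) - θ * Complex.I) * x)
            * (((u : ℂ) - θ * Complex.I) * x) ^ (-(β : ℂ))
            * ((u : ℂ) - θ * Complex.I))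
        - (Real.Gamma (1 - β) : ℂ)‖ ≤ C * R ^ (-β) := by
  obtain ⟨hβ0, hβ1⟩ := hβ
  set w : ℂ := (u:ℂ) - θ * Complex.I with hwdef
  have hwre : w.re = u := by simp [hwdef]
  have hwrepos : 0 < w.re := by rw [hwre]; exact hu
  have hwne : w ≠ 0 := by
    intro h
    rw [h] at hwre
    simp at hwre
    exact hu.ne (by rw [hwre])
  set G : ℝ → ℂ := fun x => Complex.exp (-w * x) * (x:ℂ) ^ (-(β:ℂ)) with hGdef
  have hint0 : IntegrableOn G (Ioi 0) := stmt12_integrable hβ1 hu w (le_of_eq hwre.symm)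
  have hkey := stmt12_key hβ0 hβ1 w hwrepos
  have hpow1 : w ^ ((1:ℂ) - β) = w ^ (-(β:ℂ)) * w := by
    rw [show (1:ℂ) - β = -(β:ℂ) + 1 by ring, Complex.cpow_add _ _ hwne, Complex.cpow_one]
  refine ⟨‖w ^ ((1:ℂ) - β)‖ / u + 1, by positivity, fun R hR => ?_⟩
  have h0R : (0:ℝ) ≤ R := le_trans zero_le_one hR
  have hRpos : (0:ℝ) < R := lt_of_lt_of_le zero_lt_one hR
  have hintR : IntegrableOn G (Ioi R) := hint0.mono_set (Ioi_subset_Ioi h0R)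
  have hintIoc : IntegrableOn G (Ioc 0 R) := hint0.mono_set Ioc_subset_Ioi_self
  -- rewrite the truncated integral
  have step1 : (∫ x in (0:ℝ)..R,
      Complex.exp (-w * x) * (w * x) ^ (-(β:ℂ)) * w)
      = w ^ ((1:ℂ) - β) * ∫ x in Ioc (0:ℝ) R, G x := by
    rw [intervalIntegral.integral_of_le h0R, ← integral_const_mul]
    refine setIntegral_congr_fun measurableSet_Ioc fun x hx => ?_
    rw [stmt12_mul_cpow w hwne hx.1, hpow1]
    simp only [hGdef]
    ring
  have step2 : ∫ x in Ioc (0:ℝ) R, G x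
      = (∫ x in Ioi (0:ℝ), G x) - ∫ x in Ioi R, G x := by
    have hsplit : (∫ x in Ioi (0:ℝ), G x)
        = (∫ x in Ioc (0:ℝ) R, G x) + ∫ x in Ioi R, G x := by
      rw [← Set.Ioc_union_Ioi_eq_Ioi h0R]
      exact setIntegral_union (Set.Ioc_disjoint_Ioi le_rfl) measurableSet_Ioi hintIoc hintR
    rw [hsplit]; ring
  have hpowmul : w ^ ((1:ℂ) - β) * (w ^ ((β:ℂ) - 1) * (Real.Gamma (1 - β) : ℂ))
      = (Real.Gamma (1 - β) : ℂ) := by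
    rw [← mul_assoc, ← Complex.cpow_add _ _ hwne,
      show ((1:ℂ) - β) + ((β:ℂ) - 1) = 0 by ring, Complex.cpow_zero, one_mul]
  have main_eq : (∫ x in (0:ℝ)..R,
      Complex.exp (-w * x) * (w * x) ^ (-(β:ℂ)) * w) - (Real.Gamma (1 - β) : ℂ)
      = -(w ^ ((1:ℂ) - β) * ∫ x in Ioi R, G x) := by
    rw [step1, step2, hkey, mul_sub, hpowmul]
    ring
  rw [main_eq, norm_neg, norm_mul]
  -- tail bound
  have tail1 : ‖∫ x in Ioi R, G x‖ ≤ ∫ x in Ioi R, R ^ (-β) * Real.exp (-u * x) := by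
    refine le_trans (norm_integral_le_integral_norm _) ?_
    refine setIntegral_mono_on hintR.norm ?_ measurableSet_Ioi fun x hx => ?_
    · exact ((exp_neg_integrableOn_Ioi R hu).const_mul _)
    · have hxR : R < x := mem_Ioi.mp hx
      have hx' : 0 < x := lt_trans hRpos hxR
      rw [hGdef, stmt12_norm w hx', hwre]
      rw [mul_comm (R ^ (-β))]
      exact mul_le_mul_of_nonneg_left
        (Real.rpow_le_rpow_of_nonpos hRpos hxR.le (by linarith)) (Real.exp_pos _).le
  have tail2 : ∫ x in Ioi R, R ^ (-β) * Real.exp (-u * x)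
      = R ^ (-β) * (u⁻¹ * Real.exp (-(u * R))) := by
    rw [integral_const_mul]
    congr 1
    have := integral_comp_mul_left_Ioi (fun t => Real.exp (-t)) R hu
    simp only [smul_eq_mul] at this
    rw [show (fun x : ℝ => Real.exp (-u * x)) = fun x : ℝ => Real.exp (-(u * x)) by
      funext x; ring_nf]
    rw [this, integral_exp_neg_Ioi]
  have hexp1 : Real.exp (-(u * R)) ≤ 1 := by
    rw [show (1:ℝ) = Real.exp 0 by simp]
    exact Real.exp_le_exp.mpr (by nlinarith)
  calc ‖w ^ ((1:ℂ) - β)‖ * ‖∫ x in Ioi R, G x‖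
      ≤ ‖w ^ ((1:ℂ) - β)‖ * (R ^ (-β) * (u⁻¹ * Real.exp (-(u * R)))) := by
        rw [← tail2]
        exact mul_le_mul_of_nonneg_left tail1 (norm_nonneg _)
    _ ≤ ‖w ^ ((1:ℂ) - β)‖ * (R ^ (-β) * (u⁻¹ * 1)) := by
        have hRβ : (0:ℝ) ≤ R ^ (-β) := Real.rpow_nonneg h0R _
        have : u⁻¹ * Real.exp (-(u * R)) ≤ u⁻¹ * 1 :=
          mul_le_mul_of_nonneg_left hexp1 (inv_nonneg.mpr hu.le)
        exact mul_le_mul_of_nonneg_left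
          (mul_le_mul_of_nonneg_left this hRβ) (norm_nonneg _)
    _ = (‖w ^ ((1:ℂ) - β)‖ / u) * R ^ (-β) := by ring
    _ ≤ (‖w ^ ((1:ℂ) - β)‖ / u + 1) * R ^ (-β) := by
        have hRβ : (0:ℝ) ≤ R ^ (-β) := Real.rpow_nonneg h0R _
        nlinarith
end

section
/- Let ρ > 0 and γ ∈ (0,1). Then there exists a constant C > 0 such that for every integer n ≥ 1: |∫_{−n^{−γ}}^{n^{−γ}} e^{−inθ} (1/n − iθ)^{−(ρ+1)} dθ − (2π/e) n^ρ / Γ(1+ρ)| ≤ C n^{ργ}. -/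
open Complex Real

open Complex Real MeasureTheory Set Filter FourierTransform

open Complex Real MeasureTheory Set Filter

lemma auxNorm (s : ℝ) (w : ℂ) {t : ℝ} (ht : 0 < t) :
    ‖(t:ℂ) ^ ((s:ℂ) - 1) * Complex.exp (-(w * t))‖ = Real.exp (-(w.re * t)) * t ^ (s - 1) := by
  rw [norm_mul]
  have h1 : ‖(t:ℂ) ^ ((s:ℂ) - 1)‖ = t ^ (s - 1) := by
    rw [Complex.norm_cpow_eq_rpow_re_of_pos ht]
    simp
  have h2 : ‖Complex.exp (-(w * t))‖ = Real.exp (-(w.re * t)) := by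
    rw [Complex.norm_exp]
    congr 1
    simp
  rw [h1, h2, mul_comm]

lemma auxCont (s : ℝ) (w : ℂ) :
    ContinuousOn (fun t : ℝ ↦ (t:ℂ) ^ ((s:ℂ) - 1) * Complex.exp (-(w * t))) (Set.Ioi 0) := by
  apply ContinuousOn.mul
  · apply ContinuousOn.cpow (Complex.continuous_ofReal.continuousOn) continuousOn_const
    intro t ht
    exact Or.inl (by simpa using (mem_Ioi.mp ht))
  · exact (Complex.continuous_exp.comp (by continuity)).continuousOn

lemma auxRealBound (p c : ℝ) (hp : 0 < p) (hc : 0 < c) :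
    IntegrableOn (fun t : ℝ ↦ Real.exp (-(c * t)) * t ^ (p - 1)) (Set.Ioi 0) := by
  have base : IntegrableOn (fun x : ℝ ↦ Real.exp (-x) * x ^ (p - 1)) (Set.Ioi 0) :=
    Real.GammaIntegral_convergent hp
  have resc : IntegrableOn (fun x : ℝ ↦ Real.exp (-(c * x)) * (c * x) ^ (p - 1))
      (Set.Ioi 0) := by
    rw [← mul_zero c, ← integrableOn_Ioi_comp_mul_left_iff _ _ hc] at base
    simpa using base
  refine IntegrableOn.congr_fun (resc.const_mul (c ^ (1 - p))) (fun t ht ↦ ?_) measurableSet_Ioi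
  rw [mem_Ioi] at ht
  rw [Real.mul_rpow hc.le ht.le,
    show c ^ (1 - p) * (Real.exp (-(c * t)) * (c ^ (p - 1) * t ^ (p - 1)))
      = (c ^ (1 - p) * c ^ (p - 1)) * (Real.exp (-(c * t)) * t ^ (p - 1)) from by ring,
    ← Real.rpow_add hc]
  norm_num

lemma auxIntOn (s : ℝ) (hs : 0 < s) {w : ℂ} (hw : 0 < w.re) :
    IntegrableOn (fun t : ℝ ↦ (t:ℂ) ^ ((s:ℂ) - 1) * Complex.exp (-(w * t))) (Set.Ioi 0) := by
  refine Integrable.mono' (auxRealBound s w.re hs hw)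
    ((auxCont s w).aestronglyMeasurable measurableSet_Ioi) ?_
  filter_upwards [ae_restrict_mem measurableSet_Ioi] with t ht
  rw [auxNorm s w (mem_Ioi.mp ht)]

lemma auxGammaEq (s : ℝ) (hs : 0 < s) {w : ℂ} (hw : 0 < w.re) :
    ∫ t in Set.Ioi (0:ℝ), (t:ℂ) ^ ((s:ℂ) - 1) * Complex.exp (-(w * t))
      = Complex.Gamma s * w ^ (-(s:ℂ)) := by
  set U : Set ℂ := {z | 0 < z.re} with hU
  have hU_open : IsOpen U := isOpen_lt continuous_const Complex.continuous_re
  set F : ℂ → ℂ := fun z ↦ ∫ t in Set.Ioi (0:ℝ), (t:ℂ) ^ ((s:ℂ) - 1) * Complex.exp (-(z * t))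
    with hF
  set G : ℂ → ℂ := fun z ↦ Complex.Gamma s * z ^ (-(s:ℂ)) with hG
  have hF_diff : DifferentiableOn ℂ F U := by
    intro z hz
    apply DifferentiableAt.differentiableWithinAt
    have hzre : 0 < z.re := hz
    have hε : 0 < z.re / 2 := by linarith
    have key := hasDerivAt_integral_of_dominated_loc_of_deriv_le (μ := volume.restrict (Set.Ioi 0))
      (F := fun (x : ℂ) (t : ℝ) ↦ (t:ℂ) ^ ((s:ℂ) - 1) * Complex.exp (-(x * t)))
      (F' := fun (x : ℂ) (t : ℝ) ↦ (t:ℂ) ^ ((s:ℂ) - 1) * (-(t:ℂ) * Complex.exp (-(x * t))))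
      (x₀ := z) (bound := fun t : ℝ ↦ Real.exp (-(z.re / 2 * t)) * t ^ ((s + 1) - 1))
      (Metric.ball_mem_nhds z hε) ?_ ?_ ?_ ?_ ?_ ?_
    · exact key.2.differentiableAt
    · filter_upwards with x
      exact (auxCont s x).aestronglyMeasurable measurableSet_Ioi
    · exact auxIntOn s hs hzre
    · apply ContinuousOn.aestronglyMeasurable _ measurableSet_Ioi
      apply ContinuousOn.mul
      · apply ContinuousOn.cpow (Complex.continuous_ofReal.continuousOn) continuousOn_const
        intro t ht
        exact Or.inl (by simpa using (mem_Ioi.mp ht))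
      · exact ((Complex.continuous_ofReal.neg).mul
          (Complex.continuous_exp.comp (by continuity))).continuousOn
    · filter_upwards [ae_restrict_mem measurableSet_Ioi] with t ht x hx
      rw [mem_Ioi] at ht
      have hxre : z.re / 2 < x.re := by
        have := Complex.abs_re_le_norm (x - z)
        have hd : ‖x - z‖ < z.re / 2 := by
          simpa [Complex.dist_eq] using (Metric.mem_ball.mp hx)
        have : |x.re - z.re| < z.re / 2 := by
          simpa using lt_of_le_of_lt this hd
        have := abs_lt.mp this
        linarith [this.1]
      rw [norm_mul, norm_mul]
      have h1 : ‖(t:ℂ) ^ ((s:ℂ) - 1)‖ = t ^ (s - 1) := by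
        rw [Complex.norm_cpow_eq_rpow_re_of_pos ht]
        simp
      have h2 : ‖Complex.exp (-(x * t))‖ = Real.exp (-(x.re * t)) := by
        rw [Complex.norm_exp]
        congr 1
        simp
      have h3 : ‖(-(t:ℂ))‖ = t := by
        simpa using abs_of_pos ht
      rw [h1, h2, h3]
      have e1 : t ^ (s - 1) * (t * Real.exp (-(x.re * t)))
          = t ^ ((s+1) - 1) * Real.exp (-(x.re * t)) := by
        rw [show (s+1) - 1 = (s-1) + 1 from by ring, Real.rpow_add ht, Real.rpow_one]
        ring
      rw [e1]
      have hee : Real.exp (-(x.re * t)) ≤ Real.exp (-(z.re/2 * t)) := by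
        rw [Real.exp_le_exp]; nlinarith
      nlinarith [Real.rpow_nonneg ht.le ((s+1)-1), Real.exp_pos (-(x.re*t)),
        Real.exp_pos (-(z.re/2*t))]
    · exact auxRealBound (s+1) (z.re/2) (by linarith) hε
    · filter_upwards [ae_restrict_mem measurableSet_Ioi] with t ht x hx
      have : HasDerivAt (fun x : ℂ ↦ Complex.exp (-(x * t))) (-(t:ℂ) * Complex.exp (-(x * t))) x := by
        have h0 : HasDerivAt (fun x : ℂ ↦ -(x * (t:ℂ))) (-(t:ℂ)) x := by
          have h := ((hasDerivAt_id x).mul_const (t:ℂ)).neg; rw [one_mul] at h; exact h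
        simpa [mul_comm] using h0.cexp
      simpa [mul_comm] using this.const_mul ((t:ℂ) ^ ((s:ℂ) - 1))
  have hG_diff : DifferentiableOn ℂ G U := by
    intro z hz
    apply DifferentiableAt.differentiableWithinAt
    exact ((differentiableAt_id.cpow (differentiableAt_const _) (Or.inl hz))).const_mul _
  have hFan : AnalyticOnNhd ℂ F U := hF_diff.analyticOnNhd hU_open
  have hGan : AnalyticOnNhd ℂ G U := hG_diff.analyticOnNhd hU_open
  have hU_conn : IsPreconnected U := (convex_halfSpace_re_gt 0).isPreconnected
  have hreal : ∀ r : ℝ, 0 < r → F r = G r := by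
    intro r hr
    have h0 := Complex.integral_cpow_mul_exp_neg_mul_Ioi (a := (s:ℂ))
      (by simpa using hs) hr
    have harg : ((r:ℂ)).arg ≠ Real.pi := by
      rw [Complex.arg_ofReal_of_nonneg hr.le]
      exact Real.pi_ne_zero.symm
    simp only [hF, hG]
    rw [h0, Complex.cpow_neg, one_div, Complex.inv_cpow _ _ harg, mul_comm]
  have hfreq : ∃ᶠ z in nhdsWithin (1:ℂ) {(1:ℂ)}ᶜ, F z = G z := by
    have htend : Tendsto (fun k : ℕ ↦ ((1 + (1:ℝ)/(k+1) : ℝ) : ℂ)) atTop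
        (nhdsWithin (1:ℂ) {(1:ℂ)}ᶜ) := by
      rw [tendsto_nhdsWithin_iff]
      constructor
      · have : Tendsto (fun k : ℕ ↦ (1 + (1:ℝ)/(k+1) : ℝ)) atTop (nhds 1) := by
          have := tendsto_one_div_add_atTop_nhds_zero_nat (𝕜 := ℝ)
          simpa using (tendsto_const_nhds (x := (1:ℝ)) (f := atTop)).add this
        have h2 := (Complex.continuous_ofReal.tendsto 1).comp this
        rw [show (fun k : ℕ ↦ ((1 + (1:ℝ)/(k+1) : ℝ) : ℂ))
          = Complex.ofReal ∘ (fun k : ℕ ↦ (1 + (1:ℝ)/(k+1) : ℝ)) from rfl]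
        simpa only [Complex.ofReal_one] using h2
      · filter_upwards with k
        simp only [mem_compl_iff, mem_singleton_iff]
        intro h
        have : (1 + (1:ℝ)/(k+1) : ℝ) = 1 := by exact_mod_cast h
        have hk : (0:ℝ) < (1:ℝ)/(k+1) := by positivity
        linarith
    apply htend.frequently
    apply Filter.Frequently.of_forall
    intro k
    exact hreal _ (by positivity)
  have := hFan.eqOn_of_preconnected_of_frequently_eq hGan hU_conn
    (show (1:ℂ) ∈ U by simp [hU]) hfreq
  exact this hw



lemma auxCpowNorm (s a θ : ℝ) (ha : 0 < a) :
    ‖((a:ℂ) + θ * Complex.I) ^ (-(s:ℂ))‖ = ‖(a:ℂ) + θ * Complex.I‖ ^ (-s) := by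
  have hne : ((a:ℂ) + θ * Complex.I) ≠ 0 := by
    intro h
    have := congrArg Complex.re h
    simp at this
    linarith
  rw [Complex.norm_cpow_of_ne_zero hne]
  simp

lemma auxIntB (s a : ℝ) (hs : 1 < s) (ha : 0 < a) :
    Integrable (fun θ : ℝ ↦ ((a:ℂ) + θ * Complex.I) ^ (-(s:ℂ))) := by
  have hcont : Continuous (fun θ : ℝ ↦ ((a:ℂ) + θ * Complex.I) ^ (-(s:ℂ))) := by
    apply Continuous.cpow (by continuity) continuous_const
    intro θ
    exact Or.inl (by simp [ha])
  have habs : ∀ θ : ℝ, |θ| ≤ ‖(a:ℂ) + θ * Complex.I‖ := by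
    intro θ
    have := Complex.abs_im_le_norm ((a:ℂ) + θ * Complex.I)
    simpa using this
  have hbound : ∀ θ : ℝ, 1 ≤ |θ| → ‖((a:ℂ) + θ * Complex.I) ^ (-(s:ℂ))‖ ≤ |θ| ^ (-s) := by
    intro θ hθ
    rw [auxCpowNorm s a θ ha]
    exact Real.rpow_le_rpow_of_nonpos (by linarith) (habs θ) (by linarith)
  have hIoi : IntegrableOn (fun θ : ℝ ↦ ((a:ℂ) + θ * Complex.I) ^ (-(s:ℂ))) (Set.Ioi 1) := by
    refine Integrable.mono' (integrableOn_Ioi_rpow_of_lt (by linarith : -s < -1) one_pos)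
      (hcont.aestronglyMeasurable.restrict) ?_
    filter_upwards [ae_restrict_mem measurableSet_Ioi] with θ hθ
    rw [mem_Ioi] at hθ
    have := hbound θ (by rw [abs_of_pos (by linarith)]; linarith)
    rwa [abs_of_pos (by linarith)] at this
  have hIio : IntegrableOn (fun θ : ℝ ↦ ((a:ℂ) + θ * Complex.I) ^ (-(s:ℂ))) (Set.Iio (-1)) := by
    have h1 : Integrable ((Set.Ioi (1:ℝ)).indicator (fun x : ℝ ↦ x ^ (-s))) :=
      (integrable_indicator_iff measurableSet_Ioi).2
        (integrableOn_Ioi_rpow_of_lt (by linarith : -s < -1) one_pos)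
    have h2 := h1.comp_neg
    have h3 : (fun θ : ℝ ↦ (Set.Ioi (1:ℝ)).indicator (fun x : ℝ ↦ x ^ (-s)) (-θ))
        = (Set.Iio (-1:ℝ)).indicator (fun θ : ℝ ↦ (-θ) ^ (-s)) := by
      funext θ
      by_cases h : θ < -1
      · rw [Set.indicator_of_mem (by simp; linarith), Set.indicator_of_mem (by simpa using h)]
      · rw [Set.indicator_of_notMem (by simp; linarith [not_lt.mp h]), Set.indicator_of_notMem (by simpa using h)]
    rw [h3] at h2
    have h4 : IntegrableOn (fun θ : ℝ ↦ (-θ) ^ (-s)) (Set.Iio (-1)) :=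
      (integrable_indicator_iff measurableSet_Iio).1 h2
    refine Integrable.mono' h4 (hcont.aestronglyMeasurable.restrict) ?_
    filter_upwards [ae_restrict_mem measurableSet_Iio] with θ hθ
    rw [mem_Iio] at hθ
    have := hbound θ (by rw [abs_of_neg (by linarith)]; linarith)
    rwa [abs_of_neg (by linarith)] at this
  have hIcc : IntegrableOn (fun θ : ℝ ↦ ((a:ℂ) + θ * Complex.I) ^ (-(s:ℂ)))
      (Set.Icc (-1) 1) := hcont.integrableOn_Icc
  have := (hIio.union hIcc).union hIoi
  refine integrableOn_univ.mp (this.mono_set ?_)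
  intro x _
  rcases lt_or_ge x (-1) with h | h
  · exact Or.inl (Or.inl h)
  · rcases le_or_gt x 1 with h' | h'
    · exact Or.inl (Or.inr ⟨h, h'⟩)
    · exact Or.inr h'



lemma auxFull (s a v : ℝ) (hs : 1 < s) (ha : 0 < a) (hv : 0 < v) :
    ∫ θ : ℝ, Complex.exp ((θ * v : ℝ) * Complex.I) * ((a:ℂ) + (θ:ℝ) * Complex.I) ^ (-(s:ℂ))
      = 2 * (Real.pi : ℂ) * (v:ℂ) ^ ((s:ℂ) - 1) * Complex.exp (-((a:ℂ) * v))
        / Complex.Gamma s := by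
  have hs0 : (0:ℝ) < s := by linarith
  set f : ℝ → ℂ := (Set.Ioi (0:ℝ)).indicator
    (fun x : ℝ ↦ (x:ℂ) ^ ((s:ℂ) - 1) * Complex.exp (-((a:ℂ) * x))) with hf
  have hare : (0:ℝ) < ((a:ℂ)).re := by simpa using ha
  have hInt_f : Integrable f :=
    (integrable_indicator_iff measurableSet_Ioi).2 (auxIntOn s hs0 hare)
  have h𝓕 : ∀ ξ : ℝ, 𝓕 f ξ = Complex.Gamma s
      * ((a:ℂ) + ((2 * Real.pi * ξ : ℝ):ℂ) * Complex.I) ^ (-(s:ℂ)) := by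
    intro ξ
    rw [Real.fourier_eq']
    have : ∀ x : ℝ, Complex.exp (((-2 * Real.pi * (x * ξ) : ℝ):ℂ) * Complex.I) • f x
        = (Set.Ioi (0:ℝ)).indicator
          (fun x : ℝ ↦ (x:ℂ) ^ ((s:ℂ) - 1)
            * Complex.exp (-(((a:ℂ) + ((2 * Real.pi * ξ : ℝ):ℂ) * Complex.I) * x))) x := by
      intro x
      by_cases hx : x ∈ Set.Ioi (0:ℝ)
      · rw [hf, Set.indicator_of_mem hx, Set.indicator_of_mem hx, smul_eq_mul]
        rw [show Complex.exp (((-2 * Real.pi * (x * ξ) : ℝ):ℂ) * Complex.I)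
            * ((x:ℂ) ^ ((s:ℂ) - 1) * Complex.exp (-((a:ℂ) * x)))
          = (x:ℂ) ^ ((s:ℂ) - 1) * (Complex.exp (((-2 * Real.pi * (x * ξ) : ℝ):ℂ) * Complex.I)
            * Complex.exp (-((a:ℂ) * x))) from by ring, ← Complex.exp_add]
        congr 2
        push_cast
        ring
      · rw [hf, Set.indicator_of_notMem hx, Set.indicator_of_notMem hx, smul_zero]
    rw [show (∫ x : ℝ, Complex.exp (((-2 * Real.pi * (inner ℝ x ξ : ℝ) : ℝ):ℂ) * Complex.I) • f x)
        = ∫ x : ℝ, (Set.Ioi (0:ℝ)).indicator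
          (fun x : ℝ ↦ (x:ℂ) ^ ((s:ℂ) - 1)
            * Complex.exp (-(((a:ℂ) + ((2 * Real.pi * ξ : ℝ):ℂ) * Complex.I) * x))) x
        from integral_congr_ae (Filter.Eventually.of_forall (fun x => by have h := this x; simp only [RCLike.inner_apply, conj_trivial]; rw [mul_comm ξ x]; exact h)), integral_indicator measurableSet_Ioi]
    exact auxGammaEq s hs0 (by simpa using ha)
  have hInt_F : Integrable (𝓕 f) := by
    rw [show 𝓕 f = fun ξ : ℝ ↦ Complex.Gamma s
        * ((a:ℂ) + ((2 * Real.pi * ξ : ℝ):ℂ) * Complex.I) ^ (-(s:ℂ)) from funext h𝓕]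
    have h2π : (2 * Real.pi) ≠ 0 := by positivity
    have := ((integrable_comp_mul_left_iff
      (fun θ : ℝ ↦ ((a:ℂ) + (θ:ℝ) * Complex.I) ^ (-(s:ℂ))) h2π).2 (auxIntB s a hs ha))
    exact this.const_mul _
  have hcont : ContinuousAt f v := by
    have h1 : ContinuousAt (fun x : ℝ ↦ (x:ℂ) ^ ((s:ℂ) - 1) * Complex.exp (-((a:ℂ) * x))) v :=
      (auxCont s a).continuousAt (Ioi_mem_nhds hv)
    apply h1.congr
    filter_upwards [Ioi_mem_nhds hv] with x hx
    rw [hf, Set.indicator_of_mem hx]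
  have hinv := hInt_f.fourierInv_fourier_eq hInt_F hcont
  rw [Real.fourierInv_eq'] at hinv
  have hfv : f v = (v:ℂ) ^ ((s:ℂ) - 1) * Complex.exp (-((a:ℂ) * v)) := by
    rw [hf, Set.indicator_of_mem (mem_Ioi.mpr hv)]
  have key : ∫ ξ : ℝ, Complex.exp (((2 * Real.pi * ξ : ℝ) * v : ℝ) * Complex.I)
      * ((a:ℂ) + ((2 * Real.pi * ξ : ℝ):ℂ) * Complex.I) ^ (-(s:ℂ))
      = (v:ℂ) ^ ((s:ℂ) - 1) * Complex.exp (-((a:ℂ) * v)) / Complex.Gamma s := by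
    have hΓ : Complex.Gamma (s:ℂ) ≠ 0 := by
      rw [Complex.Gamma_ofReal]
      exact_mod_cast Real.Gamma_ne_zero (fun m ↦ by
        intro h; rw [h] at hs0; have := Nat.cast_nonneg (α := ℝ) m; linarith)
    rw [eq_div_iff hΓ, mul_comm _ (Complex.Gamma (s:ℂ)), ← integral_const_mul]
    rw [← hfv, ← hinv]
    congr 1
    funext ξ
    rw [h𝓕 ξ, smul_eq_mul, show (inner ℝ ξ v : ℝ) = ξ * v from by rw [RCLike.inner_apply, conj_trivial, mul_comm]]
    push_cast
    ring
  have h2π : (0:ℝ) < 2 * Real.pi := by positivity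
  set H : ℝ → ℂ := fun θ : ℝ ↦ Complex.exp ((θ * v : ℝ) * Complex.I)
    * ((a:ℂ) + (θ:ℝ) * Complex.I) ^ (-(s:ℂ)) with hH
  have hcv := MeasureTheory.Measure.integral_comp_mul_left H (2*Real.pi)
  have hkey2 : (∫ x : ℝ, H (2*Real.pi*x))
      = (v:ℂ) ^ ((s:ℂ) - 1) * Complex.exp (-((a:ℂ) * v)) / Complex.Gamma s := by
    rw [← key]
  rw [hkey2] at hcv
  have hinvv : ((2*Real.pi:ℝ)) • ((v:ℂ) ^ ((s:ℂ) - 1) * Complex.exp (-((a:ℂ) * v)) / Complex.Gamma s)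
      = ((2*Real.pi:ℝ)) • (|(2*Real.pi)⁻¹| • ∫ θ : ℝ, H θ) := by rw [← hcv]
  rw [smul_smul, abs_of_pos (by positivity), mul_inv_cancel₀ (ne_of_gt h2π), one_smul] at hinvv
  rw [← hinvv, Complex.real_smul]
  push_cast
  ring


open scoped FourierTransform


/-- For `ρ > 0` and `γ ∈ (0,1)` there is `C > 0` such that for all `n ≥ 1`,
`|∫_{-n^{-γ}}^{n^{-γ}} e^{-inθ} (1/n - iθ)^{-(ρ+1)} dθ - (2π/e) n^ρ/Γ(1+ρ)| ≤ C n^{ργ}`. -/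
theorem stmt14 (ρ γ : ℝ) (hρ : 0 < ρ) (hγ : γ ∈ Set.Ioo (0:ℝ) 1) :
    ∃ C > (0:ℝ), ∀ n : ℕ, 1 ≤ n →
      ‖(∫ θ in (-((n:ℝ) ^ (-γ)))..((n:ℝ) ^ (-γ)),
          Complex.exp (-(n : ℂ) * θ * Complex.I)
            * (((1 / (n:ℝ) : ℝ) : ℂ) - θ * Complex.I) ^ (-(ρ : ℂ) - 1))
        - ((2 * Real.pi / Real.exp 1 * (n:ℝ) ^ ρ / Real.Gamma (1 + ρ) : ℝ) : ℂ)‖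
      ≤ C * (n:ℝ) ^ (ρ * γ) := by

  refine ⟨2 / ρ, by positivity, ?_⟩
  intro n hn
  set s : ℝ := ρ + 1 with hsdef
  have hs : 1 < s := by simp [hsdef]; linarith
  have hs0 : (0:ℝ) < s := by linarith
  have hnR : (0:ℝ) < (n:ℝ) := by exact_mod_cast hn
  set a : ℝ := 1 / (n:ℝ) with hadef
  have ha : 0 < a := by positivity
  set b : ℝ := (n:ℝ) ^ (-γ) with hbdef
  have hb : 0 < b := Real.rpow_pos_of_pos hnR _
  set H : ℝ → ℂ := fun θ : ℝ ↦ Complex.exp ((θ * (n:ℝ) : ℝ) * Complex.I)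
    * ((a:ℂ) + (θ:ℝ) * Complex.I) ^ (-(s:ℂ)) with hH
  set G : ℝ → ℂ := fun θ : ℝ ↦ H (-θ) with hG
  -- norms
  have hHnorm : ∀ θ : ℝ, ‖H θ‖ = ‖(a:ℂ) + (θ:ℝ) * Complex.I‖ ^ (-s) := by
    intro θ
    rw [hH]
    simp only
    rw [norm_mul, auxCpowNorm s a θ ha]
    have : ‖Complex.exp ((θ * (n:ℝ) : ℝ) * Complex.I)‖ = 1 := by
      rw [Complex.norm_exp]
      simp
    rw [this, one_mul]
  have habs_eq : ∀ θ : ℝ, ‖(a:ℂ) + ((-θ:ℝ):ℂ) * Complex.I‖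
      = ‖(a:ℂ) + (θ:ℝ) * Complex.I‖ := by
    intro θ
    rw [Complex.norm_def, Complex.norm_def, Complex.normSq_add_mul_I, Complex.normSq_add_mul_I]
    ring_nf
  have hGnorm : ∀ θ : ℝ, ‖G θ‖ = ‖(a:ℂ) + (θ:ℝ) * Complex.I‖ ^ (-s) := by
    intro θ
    rw [hG]
    simp only
    rw [hHnorm (-θ)]
    rw [show ((-θ : ℝ) : ℂ) = ((-θ:ℝ):ℂ) from by norm_num] at *
    rw [show ((( -θ : ℝ)) : ℂ) = -(θ:ℂ) from by push_cast; ring] at *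
    rw [← habs_eq θ]
    congr 2
    push_cast
    ring
  have habs_ge : ∀ θ : ℝ, |θ| ≤ ‖(a:ℂ) + (θ:ℝ) * Complex.I‖ := by
    intro θ
    have := Complex.abs_im_le_norm ((a:ℂ) + θ * Complex.I)
    simpa using this
  have hbd : ∀ θ : ℝ, b ≤ θ → ‖(a:ℂ) + (θ:ℝ) * Complex.I‖ ^ (-s) ≤ θ ^ (-s) := by
    intro θ hθ
    have hθ0 : 0 < θ := lt_of_lt_of_le hb hθ
    refine Real.rpow_le_rpow_of_nonpos hθ0 ?_ (by linarith)
    calc θ = |θ| := (abs_of_pos hθ0).symm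
    _ ≤ _ := habs_ge θ
  -- integrability
  have hHcont : Continuous H := by
    rw [hH]
    apply Continuous.mul
    · exact Complex.continuous_exp.comp (by continuity)
    · apply Continuous.cpow (by continuity) continuous_const
      intro θ
      exact Or.inl (by simp [ha])
  have hHint : Integrable H := by
    refine Integrable.mono' (auxIntB s a hs ha).norm hHcont.aestronglyMeasurable ?_
    filter_upwards with θ
    rw [hHnorm θ, auxCpowNorm s a θ ha]
  have hGint : Integrable G := hHint.comp_neg
  -- full-line value
  have hfull : ∫ θ : ℝ, G θ
      = 2 * (Real.pi : ℂ) * ((n:ℝ):ℂ) ^ ((s:ℂ) - 1) * Complex.exp (-((a:ℂ) * (n:ℝ)))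
        / Complex.Gamma s := by
    have h1 : ∫ θ : ℝ, G θ = ∫ θ : ℝ, H θ := by
      rw [hG]
      have := MeasureTheory.Measure.integral_comp_mul_left H (-1)
      simp only [neg_one_mul, abs_of_nonneg, inv_neg, inv_one, abs_neg, abs_one, one_smul]
        at this
      exact this
    rw [h1, hH]
    exact auxFull s a (n:ℝ) hs ha hnR
  -- tail bounds
  have tail_le : ∀ (S : Set ℝ) (F : ℝ → ℂ), MeasurableSet S → S ⊆ Set.Ioi b →
      Integrable F → (∀ θ : ℝ, ‖F θ‖ = ‖(a:ℂ) + (θ:ℝ) * Complex.I‖ ^ (-s)) →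
      ‖∫ θ in S, F θ‖ ≤ b ^ (1 - s) / (s - 1) := by
    intro S F hSm hSsub hFint hFnorm
    have hrint : IntegrableOn (fun θ : ℝ ↦ θ ^ (-s)) (Set.Ioi b) :=
      integrableOn_Ioi_rpow_of_lt (by linarith) hb
    calc ‖∫ θ in S, F θ‖ ≤ ∫ θ in S, ‖F θ‖ := norm_integral_le_integral_norm _
    _ ≤ ∫ θ in Set.Ioi b, ‖F θ‖ := by
        apply setIntegral_mono_set hFint.norm.integrableOn
        · filter_upwards with θ using norm_nonneg _
        · exact HasSubset.Subset.eventuallyLE hSsub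
    _ ≤ ∫ θ in Set.Ioi b, θ ^ (-s) := by
        apply setIntegral_mono_on hFint.norm.integrableOn hrint measurableSet_Ioi
        intro θ hθ
        rw [hFnorm θ]
        exact hbd θ (le_of_lt hθ)
    _ = -b ^ (-s + 1) / (-s + 1) := integral_Ioi_rpow_of_lt (by linarith) hb
    _ = b ^ (1 - s) / (s - 1) := by
        rw [show (-s + 1) = (1 - s) from by ring]
        rw [div_eq_div_iff (by linarith) (by linarith)]
        ring
  have tail1 : ‖∫ θ in Set.Ioi b, G θ‖ ≤ b ^ (1 - s) / (s - 1) :=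
    tail_le _ G measurableSet_Ioi (fun _ h ↦ h) hGint hGnorm
  have tail2 : ‖∫ θ in Set.Iic (-b), G θ‖ ≤ b ^ (1 - s) / (s - 1) := by
    have h1 : (∫ θ in Set.Iic (-b), G θ) = ∫ θ in Set.Ioi b, H θ := by
      have := integral_comp_neg_Iic (-b) H
      rw [neg_neg] at this
      exact this
    rw [h1]
    exact tail_le _ H measurableSet_Ioi (fun _ h ↦ h) hHint hHnorm
  -- splitting
  have hsplit : (∫ θ in (-b)..b, G θ)
      = (∫ θ : ℝ, G θ) - (∫ θ in Set.Ioi b, G θ) - (∫ θ in Set.Iic (-b), G θ) := by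
    have h1 := intervalIntegral.integral_Iic_sub_Iic (f := G) (μ := volume) (a := -b) (b := b)
      hGint.integrableOn hGint.integrableOn
    have h2 := intervalIntegral.integral_Iic_add_Ioi (f := G) (μ := volume) (b := b)
      hGint.integrableOn hGint.integrableOn
    rw [← h1, ← h2]
    ring
  -- identify the interval integrand with G
  have hinteq : (∫ θ in (-b)..b, Complex.exp (-(n : ℂ) * θ * Complex.I)
        * (((1 / (n:ℝ) : ℝ) : ℂ) - θ * Complex.I) ^ (-(ρ : ℂ) - 1))
      = ∫ θ in (-b)..b, G θ := by
    apply intervalIntegral.integral_congr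
    intro θ _
    rw [hG, hH]
    simp only
    congr 1
    · congr 1
      push_cast
      ring
    · rw [show ((a:ℂ) + ((-θ:ℝ):ℂ) * Complex.I) = (((1 / (n:ℝ) : ℝ) : ℂ) - θ * Complex.I)
        from by rw [hadef]; push_cast; ring]
      congr 1
      rw [hsdef]
      push_cast
      ring
  -- identify the main term
  have hmain : ((2 * Real.pi / Real.exp 1 * (n:ℝ) ^ ρ / Real.Gamma (1 + ρ) : ℝ) : ℂ)
      = 2 * (Real.pi : ℂ) * ((n:ℝ):ℂ) ^ ((s:ℂ) - 1) * Complex.exp (-((a:ℂ) * (n:ℝ)))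
        / Complex.Gamma s := by
    have han : ((a:ℂ) * (n:ℝ)) = 1 := by
      rw [hadef]
      push_cast
      rw [one_div]
      exact inv_mul_cancel₀ (by exact_mod_cast hnR.ne')
    rw [han, show ((s:ℝ):ℂ) - 1 = ((ρ:ℝ):ℂ) from by rw [hsdef]; push_cast; ring,
      ← Complex.ofReal_cpow hnR.le, Complex.Gamma_ofReal,
      show Complex.exp (-1) = ((Real.exp (-1) : ℝ) : ℂ) from by
        rw [Complex.ofReal_exp]; norm_num,
      show s = 1 + ρ from by rw [hsdef]; ring]
    rw [show (2 * Real.pi / Real.exp 1 * (n:ℝ) ^ ρ / Real.Gamma (1 + ρ) : ℝ)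
      = (2 * Real.pi * ((n:ℝ) ^ ρ) * Real.exp (-1) / Real.Gamma (1 + ρ) : ℝ) from by
        rw [Real.exp_neg]; ring]
    push_cast
    ring
  rw [hinteq, hsplit, hmain, ← hfull]
  have hnormle : ‖(∫ θ : ℝ, G θ) - (∫ θ in Set.Ioi b, G θ) - (∫ θ in Set.Iic (-b), G θ)
      - (∫ θ : ℝ, G θ)‖ ≤ b ^ (1 - s) / (s - 1) + b ^ (1 - s) / (s - 1) := by
    rw [show (∫ θ : ℝ, G θ) - (∫ θ in Set.Ioi b, G θ) - (∫ θ in Set.Iic (-b), G θ)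
      - (∫ θ : ℝ, G θ) = -((∫ θ in Set.Ioi b, G θ) + (∫ θ in Set.Iic (-b), G θ)) from by ring,
      norm_neg]
    exact le_trans (norm_add_le _ _) (add_le_add tail1 tail2)
  refine le_trans hnormle (le_of_eq ?_)
  have hbs : b ^ (1 - s) = (n:ℝ) ^ (ρ * γ) := by
    rw [hbdef, ← Real.rpow_mul hnR.le, show (-γ) * (1 - s) = ρ * γ from by rw [hsdef]; ring]
  rw [hbs, show s - 1 = ρ from by rw [hsdef]; ring]
  field_simp
  ring
end

section
/- Define f(x) = x(1 + x e^{−1/x}) for x ∈ (0, 1/2]. Let (x_n)_{n≥1} be a sequence in (0, 1/2] satisfying x_1 = 1/2 and f(x_{n+1}) = x_n for all n ≥ 1. Then lim_{n→∞} x_n · log n = 1. -/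
open Filter Real

/-- For the left branch `f(x) = x(1 + x e^{-1/x})` of the map (1.2),
the sequence `x_1 = 1/2`, `f(x_{n+1}) = x_n` (with `x_n ∈ (0,1/2]`) satisfies
`x_n · log n → 1` as `n → ∞`. -/
theorem stmt15 (x : ℕ → ℝ)
    (hx1 : x 1 = 1 / 2)
    (hmem : ∀ n : ℕ, 1 ≤ n → x n ∈ Set.Ioc (0:ℝ) (1 / 2))
    (hrec : ∀ n : ℕ, 1 ≤ n →
      x (n + 1) * (1 + x (n + 1) * Real.exp (-(1 / x (n + 1)))) = x n) :
    Tendsto (fun n : ℕ => x n * Real.log n) atTop (nhds 1) := by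
  set y : ℕ → ℝ := fun n => (x n)⁻¹ with hy
  set z : ℕ → ℝ := fun n => Real.exp (y n) with hz
  set d : ℕ → ℝ := fun n => (z (n+1) + x (n+1))⁻¹ with hd
  have hpos : ∀ n, 1 ≤ n → 0 < x n := fun n hn => (hmem n hn).1
  have hzpos : ∀ n, 0 < z n := fun n => Real.exp_pos _
  have hdpos : ∀ n, 1 ≤ n → 0 < d n := by
    intro n hn
    have := hpos (n+1) (by omega)
    have := hzpos (n+1)
    simp only [hd]
    positivity
  -- step recurrence in terms of y
  have key : ∀ n, 1 ≤ n → y (n+1) = y n + d n := by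
    intro n hn
    have h := hrec n hn
    have ha := hpos (n+1) (by omega)
    have hzp := hzpos (n+1)
    have hE : Real.exp (-(1 / x (n+1))) = (z (n+1))⁻¹ := by
      rw [one_div, Real.exp_neg]
    rw [hE] at h
    simp only [hy, hd, hz]
    rw [← h]
    simp only [hz, hy]
    have h1 : (0:ℝ) < 1 + x (n+1) * (rexp ((x (n+1))⁻¹))⁻¹ := by positivity
    field_simp
  -- strictly decreasing
  have hdec : ∀ n, 1 ≤ n → x (n+1) < x n := by
    intro n hn
    have h := hrec n hn
    have ha := hpos (n+1) (by omega)
    have hE : 0 < Real.exp (-(1 / x (n+1))) := Real.exp_pos _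
    nlinarith [mul_pos (mul_pos ha ha) hE]
  have hmono : ∀ m n, 1 ≤ m → m ≤ n → x n ≤ x m := by
    intro m n hm hmn
    induction n with
    | zero => omega
    | succ k ih =>
      rcases Nat.lt_or_ge m (k+1) with h | h
      · exact le_trans (hdec k (by omega)).le (ih (by omega))
      · have : m = k + 1 := by omega
        simp [this]
  -- x tends to 0
  have hx0 : Tendsto x atTop (nhds 0) := by
    rw [Metric.tendsto_atTop]
    intro ε hε
    set c := min ε (1/2) with hc
    have hcpos : 0 < c := lt_min hε (by norm_num)
    set C := c^2 * Real.exp (-(1/c)) with hC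
    have hCpos : 0 < C := by positivity
    have hexist : ∃ N, 1 ≤ N ∧ x N < c := by
      by_contra hcon
      push_neg at hcon
      have hstep : ∀ k, 1 ≤ k → x (k+1) + C ≤ x k := by
        intro k hk
        have h := hrec k hk
        have ha := hpos (k+1) (by omega)
        have hca : c ≤ x (k+1) := hcon (k+1) (by omega)
        have hEle : Real.exp (-(1/c)) ≤ Real.exp (-(1/x (k+1))) := by
          apply Real.exp_le_exp.2
          have := one_div_le_one_div_of_le hcpos hca
          linarith
        have h1 : c^2 * Real.exp (-(1/c)) ≤ c^2 * Real.exp (-(1/x (k+1))) :=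
          mul_le_mul_of_nonneg_left hEle (by positivity)
        have h2 : c^2 * Real.exp (-(1/x (k+1))) ≤ x (k+1)^2 * Real.exp (-(1/x (k+1))) :=
          mul_le_mul_of_nonneg_right (pow_le_pow_left₀ hcpos.le hca 2) (Real.exp_pos _).le
        nlinarith [h, h1, h2]
      have hind : ∀ N : ℕ, x (N+1) + N * C ≤ x 1 := by
        intro N; induction N with
        | zero => simp
        | succ k ih =>
          have := hstep (k+1) (by omega)
          push_cast
          push_cast at ih
          linarith
      obtain ⟨N, hN⟩ := exists_nat_gt ((1/2) / C)
      have h3 := hind N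
      have hxp := hpos (N+1) (by omega)
      rw [hx1] at h3
      have h4 : (N:ℝ) * C ≤ 1/2 := by linarith
      have h5 : (N:ℝ) ≤ (1/2)/C := by rwa [le_div_iff₀ hCpos]
      linarith
    obtain ⟨N, hN1, hNc⟩ := hexist
    refine ⟨N, fun n hn => ?_⟩
    have h1 : x n ≤ x N := hmono N n hN1 hn
    have h2 : 0 < x n := hpos n (le_trans hN1 hn)
    rw [dist_zero_right, Real.norm_eq_abs, abs_of_pos h2]
    calc x n ≤ x N := h1
      _ < c := hNc
      _ ≤ ε := min_le_left _ _
  -- y tends to infinity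
  have hytop : Tendsto y atTop atTop := by
    have hx0' : Tendsto x atTop (nhdsWithin 0 (Set.Ioi 0)) := by
      rw [tendsto_nhdsWithin_iff]
      exact ⟨hx0, eventually_atTop.2 ⟨1, fun n hn => hpos n hn⟩⟩
    exact tendsto_inv_nhdsGT_zero.comp hx0'
  have hztop : Tendsto z atTop atTop := Real.tendsto_exp_atTop.comp hytop
  -- differences of z tend to 1
  have hxs : Tendsto (fun n => x (n+2)) atTop (nhds 0) := hx0.comp (tendsto_add_atTop_nat 2)
  have hzs : Tendsto (fun n : ℕ => z (n+2)) atTop atTop := hztop.comp (tendsto_add_atTop_nat 2)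
  have hds : Tendsto (fun n : ℕ => d (n+1)) atTop (nhds 0) := by
    have h1 : Tendsto (fun n : ℕ => z (n+2) + x (n+2)) atTop atTop := by
      have := hxs.add_atTop hzs
      simpa [add_comm] using this
    exact tendsto_inv_atTop_zero.comp h1
  have hdiff : Tendsto (fun n => z (n+2) - z (n+1)) atTop (nhds 1) := by
    have hA : Tendsto (fun n : ℕ => z (n+2) * d (n+1)) atTop (nhds 1) := by
      have h0 : Tendsto (fun n : ℕ => x (n+2) * (z (n+2))⁻¹) atTop (nhds 0) := by
        simpa using hxs.mul (tendsto_inv_atTop_zero.comp hzs)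
      have h1 : Tendsto (fun n : ℕ => (1 + x (n+2) * (z (n+2))⁻¹)⁻¹) atTop (nhds 1) := by
        have := (Tendsto.add (tendsto_const_nhds (x := (1:ℝ))) h0).inv₀ (by norm_num)
        simpa using this
      refine h1.congr fun n => ?_
      have hzp := hzpos (n+2)
      have hxp := hpos (n+2) (by omega)
      have hzx : z (n+2) + x (n+2) ≠ 0 := by positivity
      simp only [hd]
      field_simp
    have hB : Tendsto (fun n : ℕ => Real.exp (-(d (n+1)))) atTop (nhds 1) := by
      have hneg : Tendsto (fun n : ℕ => -(d (n+1))) atTop (nhds 0) := by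
        simpa using hds.neg
      have := (Real.continuous_exp.tendsto 0).comp hneg
      simpa [Function.comp_def] using this
    have hC : Tendsto (fun n : ℕ => (Real.exp (d (n+1)) - 1) / d (n+1)) atTop (nhds 1) := by
      have hslope := hasDerivAt_iff_tendsto_slope.mp (Real.hasDerivAt_exp 0)
      have hdne : Tendsto (fun n : ℕ => d (n+1)) atTop (nhdsWithin 0 {(0:ℝ)}ᶜ) := by
        rw [tendsto_nhdsWithin_iff]
        exact ⟨hds, Eventually.of_forall fun n =>
          Set.mem_compl_singleton_iff.2 (hdpos (n+1) (by omega)).ne'⟩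
      have h2 := hslope.comp hdne
      rw [Real.exp_zero] at h2
      refine h2.congr fun n => ?_
      simp [Function.comp, slope_def_field]
    have hprod := (hA.mul hB).mul hC
    rw [show (1:ℝ) * 1 * 1 = 1 by norm_num] at hprod
    refine hprod.congr fun n => ?_
    have hk := key (n+1) (by omega)
    have hzp := hzpos (n+1)
    have hDpos := hdpos (n+1) (by omega)
    have hz2 : z (n+2) = z (n+1) * Real.exp (d (n+1)) := by
      simp only [hz]
      rw [← Real.exp_add, ← hk]
    rw [hz2, Real.exp_neg]
    have hEp := Real.exp_pos (d (n+1))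
    field_simp
  -- Cesaro
  have hcesaro : Tendsto (fun n : ℕ => z n / n) atTop (nhds 1) := by
    have hu := hdiff.cesaro
    have hsum : ∀ n : ℕ, ∑ i ∈ Finset.range n, (z (i+2) - z (i+1)) = z (n+1) - z 1 := by
      intro n
      have := Finset.sum_range_sub (fun i => z (i+1)) n
      simpa using this
    have h1 : Tendsto (fun n : ℕ => (n:ℝ)⁻¹ * (z (n+1) - z 1)) atTop (nhds 1) := by
      refine hu.congr fun n => ?_
      rw [hsum]
    have h2 : Tendsto (fun n : ℕ => (n:ℝ)⁻¹ * z 1) atTop (nhds 0) := by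
      have := (tendsto_inv_atTop_zero.comp (tendsto_natCast_atTop_atTop (R := ℝ))).mul_const (z 1)
      simpa using this
    have h3 : Tendsto (fun n : ℕ => (n:ℝ)⁻¹ * z (n+1)) atTop (nhds 1) := by
      have := h1.add h2
      rw [add_zero] at this
      refine this.congr fun n => ?_
      ring
    have h4 : Tendsto (fun n : ℕ => (n:ℝ) / ((n:ℝ) + 1)) atTop (nhds 1) := by
      simpa using tendsto_natCast_div_add_atTop (1:ℝ)
    have h5 := h3.mul h4
    rw [mul_one] at h5
    rw [← tendsto_add_atTop_iff_nat 1]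
    refine h5.congr' ?_
    filter_upwards [eventually_ge_atTop 1] with n hn
    have hn0 : (n:ℝ) ≠ 0 := Nat.cast_ne_zero.2 (by omega)
    push_cast
    field_simp
  -- y n - log n → 0
  have hylog : Tendsto (fun n : ℕ => y n - Real.log n) atTop (nhds 0) := by
    have h1 : Tendsto (fun n : ℕ => Real.log (z n / n)) atTop (nhds 0) := by
      have := (Real.continuousAt_log one_ne_zero).tendsto.comp hcesaro
      simpa [Function.comp_def] using this
    refine h1.congr' ?_
    filter_upwards [eventually_ge_atTop 1] with n hn
    have hn0 : (n:ℝ) ≠ 0 := Nat.cast_ne_zero.2 (by omega)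
    rw [Real.log_div (hzpos n).ne' hn0]
    simp [hz, Real.log_exp]
  have hlogtop : Tendsto (fun n : ℕ => Real.log n) atTop atTop :=
    Real.tendsto_log_atTop.comp tendsto_natCast_atTop_atTop
  have h5 : Tendsto (fun n : ℕ => (y n - Real.log n) * (Real.log n)⁻¹) atTop (nhds 0) := by
    simpa using hylog.mul (tendsto_inv_atTop_zero.comp hlogtop)
  have h6 : Tendsto (fun n : ℕ => y n * (Real.log n)⁻¹) atTop (nhds 1) := by
    have h := h5.add (tendsto_const_nhds (x := (1:ℝ)))
    rw [zero_add] at h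
    refine h.congr' ?_
    filter_upwards [eventually_ge_atTop 2] with n hn
    have hlpos : 0 < Real.log n := Real.log_pos (by exact_mod_cast (by omega : 1 < n))
    field_simp
    ring
  have h7 : Tendsto (fun n : ℕ => (y n * (Real.log n)⁻¹)⁻¹) atTop (nhds 1) := by
    simpa using h6.inv₀ one_ne_zero
  refine h7.congr' ?_
  filter_upwards [eventually_ge_atTop 2] with n hn
  have hlpos : 0 < Real.log n := Real.log_pos (by exact_mod_cast (by omega : 1 < n))
  have hxp : 0 < x n := hpos n (by omega)
  simp only [hy]
  rw [mul_inv, inv_inv, inv_inv]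
end

section
/- Let 0 < β < 1 < q < 2 and let H : (0,∞) → ℂ be measurable with |H(x)| ≤ C_0 x^{−β} for 0 < x ≤ 1 and |H(x)| ≤ C_0 x^{−q} for x ≥ 1, for some constant C_0. Then there exists a constant C > 0 such that for all u > 0 and θ ∈ ℝ with 0 < |u − iθ| ≤ 1: |∫_0^∞ (e^{−(u−iθ)x} − 1) H(x) dx| ≤ C |u − iθ|^{q−1}. -/
open Complex Real MeasureTheory Set

lemma expbd (z : ℂ) (hz : 0 ≤ z.re) (x : ℝ) (hx : 0 ≤ x) :
    ‖Complex.exp (-z * x) - 1‖ ≤ 2 * min 1 (‖z‖ * x) := by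
  have habs : ‖-z * x‖ = ‖z‖ * x := by
    rw [norm_mul, norm_neg]
    rw [Complex.norm_real, Real.norm_eq_abs, _root_.abs_of_nonneg hx]
  rcases le_or_gt (‖z‖ * x) 1 with h | h
  · have := Complex.norm_exp_sub_one_le (x := -z * x) (by rw [habs]; exact h)
    rw [habs] at this
    calc ‖Complex.exp (-z * x) - 1‖ ≤ 2 * (‖z‖ * x) := this
      _ = 2 * min 1 (‖z‖ * x) := by rw [min_eq_right h]
  · have h1 : ‖Complex.exp (-z * x)‖ ≤ 1 := by
      rw [Complex.norm_exp]
      apply Real.exp_le_one_iff.mpr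
      have : (-z * (x:ℂ)).re = -(z.re * x) := by simp [Complex.mul_re]
      rw [this]
      exact neg_nonpos.mpr (mul_nonneg hz hx)
    calc ‖Complex.exp (-z * x) - 1‖
        ≤ ‖Complex.exp (-z * x)‖ + 1 := by
          simpa using (norm_sub_le (Complex.exp (-z*x)) 1)
      _ ≤ 2 := by linarith
      _ = 2 * min 1 (‖z‖ * x) := by rw [min_eq_left h.le]; ring

lemma minK_integrable (q : ℝ) (hq1 : 1 < q) (hq2 : q < 2) :
    IntegrableOn (fun t : ℝ => min 1 t * t ^ (-q)) (Set.Ioi 0) := by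
  rw [← Set.Ioc_union_Ioi_eq_Ioi (zero_le_one (α := ℝ))]
  apply MeasureTheory.IntegrableOn.union
  · have hbase : IntegrableOn (fun t : ℝ => t ^ (1 - q)) (Set.Ioc 0 1) := by
      have := intervalIntegral.intervalIntegrable_rpow' (a := 0) (b := 1)
        (r := 1 - q) (by linarith)
      rwa [intervalIntegrable_iff_integrableOn_Ioc_of_le zero_le_one] at this
    apply hbase.congr_fun _ measurableSet_Ioc
    intro t ht
    have h1 : min 1 t = t := min_eq_right (by linarith [ht.2] : t ≤ 1)
    simp only [h1]
    rw [show (1 : ℝ) - q = 1 + (-q) by ring, Real.rpow_add ht.1, Real.rpow_one]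
  · have hbase : IntegrableOn (fun t : ℝ => t ^ (-q)) (Set.Ioi 1) :=
      integrableOn_Ioi_rpow_of_lt (by linarith) zero_lt_one
    apply hbase.congr_fun _ measurableSet_Ioi
    intro t ht
    have h1 : min 1 t = 1 := min_eq_left (le_of_lt ht)
    simp only [h1, one_mul]

/-- If `0 < β < 1 < q < 2` and `|H(x)| ≤ C₀ x^{-β}` for `x ≤ 1`,
`|H(x)| ≤ C₀ x^{-q}` for `x ≥ 1`, then there is `C > 0` such that for all `u > 0`
and `θ ∈ ℝ` with `|u - iθ| ≤ 1`,
`|∫_0^∞ (e^{-(u-iθ)x} - 1) H(x) dx| ≤ C |u - iθ|^{q-1}`. -/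
theorem stmt18 (β q : ℝ) (hβ : 0 < β) (hβ1 : β < 1) (hq1 : 1 < q) (hq2 : q < 2)
    (H : ℝ → ℂ) (hHmeas : Measurable H) (C₀ : ℝ)
    (hH0 : ∀ x : ℝ, 0 < x → x ≤ 1 → ‖H x‖ ≤ C₀ * x ^ (-β))
    (hH1 : ∀ x : ℝ, 1 ≤ x → ‖H x‖ ≤ C₀ * x ^ (-q)) :
    ∃ C > (0:ℝ), ∀ u θ : ℝ, 0 < u →
      ‖(u : ℂ) - θ * Complex.I‖ ≤ 1 →
      ‖∫ x in Set.Ioi (0:ℝ),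
          (Complex.exp (-((u : ℂ) - θ * Complex.I) * x) - 1) * H x‖
        ≤ C * ‖(u : ℂ) - θ * Complex.I‖ ^ (q - 1) := by
  -- constants
  have hC₀ : 0 ≤ C₀ := by
    have := hH0 1 one_pos le_rfl
    rw [Real.one_rpow, mul_one] at this
    exact le_trans (norm_nonneg _) this
  set g : ℝ → ℝ := fun t => min 1 t * t ^ (-q) with hgdef
  set K : ℝ := ∫ t in Set.Ioi (0:ℝ), g t with hKdef
  have hK0 : 0 ≤ K := by
    apply setIntegral_nonneg measurableSet_Ioi
    intro t ht
    exact mul_nonneg (le_min zero_le_one (le_of_lt ht)) (Real.rpow_nonneg (le_of_lt ht) _)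
  have h2β : 0 < 2 - β := by linarith
  refine ⟨2 * C₀ / (2 - β) + 2 * C₀ * K + 1, by positivity, ?_⟩
  intro u θ hu hr1
  set z : ℂ := (u:ℂ) - θ * Complex.I with hzdef
  set r : ℝ := ‖z‖ with hrdef
  have hzre : z.re = u := by simp [hzdef]
  have hr : 0 < r := by
    apply norm_pos_iff.mpr
    intro h
    rw [h] at hzre
    simp at hzre
    exact absurd hzre.symm (ne_of_gt hu)
  have hrq : r ≤ r ^ (q - 1) := by
    calc r = r ^ (1:ℝ) := (Real.rpow_one r).symm
      _ ≤ r ^ (q - 1) := Real.rpow_le_rpow_of_exponent_ge hr hr1 (by linarith)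
  have hrqnn : 0 ≤ r ^ (q - 1) := Real.rpow_nonneg hr.le _
  set f : ℝ → ℂ := fun x : ℝ => (Complex.exp (-z * x) - 1) * H x with hfdef
  have hfmeas : Measurable f := by
    apply Measurable.mul _ hHmeas
    exact ((Complex.continuous_exp.comp
      (continuous_const.mul Complex.continuous_ofReal)).sub continuous_const).measurable
  have hnorm : ∀ x : ℝ, 0 < x → ‖f x‖ ≤ 2 * min 1 (r * x) * ‖H x‖ := by
    intro x hx
    rw [hfdef]
    simp only [norm_mul]
    exact mul_le_mul_of_nonneg_right (expbd z (by rw [hzre]; exact hu.le) x hx.le)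
      (norm_nonneg _)
  -- integrability on (0,1]
  have hmaj1 : IntegrableOn (fun x : ℝ => 2 * C₀ * x ^ (-β)) (Set.Ioc 0 1) := by
    have := intervalIntegral.intervalIntegrable_rpow' (a := 0) (b := 1)
      (r := -β) (by linarith)
    rw [intervalIntegrable_iff_integrableOn_Ioc_of_le zero_le_one] at this
    exact this.const_mul _
  have hf1 : IntegrableOn f (Set.Ioc 0 1) := by
    apply hmaj1.integrable.mono' hfmeas.aestronglyMeasurable
    rw [ae_restrict_iff' measurableSet_Ioc]
    filter_upwards with x hx
    calc ‖f x‖ ≤ 2 * min 1 (r * x) * ‖H x‖ := hnorm x hx.1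
      _ ≤ 2 * 1 * (C₀ * x ^ (-β)) := by
          apply mul_le_mul
          · exact mul_le_mul_of_nonneg_left (min_le_left _ _) (by norm_num)
          · exact hH0 x hx.1 hx.2
          · exact norm_nonneg _
          · norm_num
      _ = 2 * C₀ * x ^ (-β) := by ring
  -- integrability on (1,∞)
  have hmaj2 : IntegrableOn (fun x : ℝ => 2 * C₀ * x ^ (-q)) (Set.Ioi 1) :=
    (integrableOn_Ioi_rpow_of_lt (by linarith) zero_lt_one).const_mul _
  have hf2 : IntegrableOn f (Set.Ioi 1) := by
    apply hmaj2.integrable.mono' hfmeas.aestronglyMeasurable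
    rw [ae_restrict_iff' measurableSet_Ioi]
    filter_upwards with x hx
    calc ‖f x‖ ≤ 2 * min 1 (r * x) * ‖H x‖ := hnorm x (lt_trans one_pos hx)
      _ ≤ 2 * 1 * (C₀ * x ^ (-q)) := by
          apply mul_le_mul
          · exact mul_le_mul_of_nonneg_left (min_le_left _ _) (by norm_num)
          · exact hH1 x hx.le
          · exact norm_nonneg _
          · norm_num
      _ = 2 * C₀ * x ^ (-q) := by ring
  -- split the integral
  have hsplit : (∫ x in Set.Ioi (0:ℝ), f x)
      = (∫ x in Set.Ioc (0:ℝ) 1, f x) + ∫ x in Set.Ioi (1:ℝ), f x := by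
    rw [← Set.Ioc_union_Ioi_eq_Ioi (zero_le_one (α := ℝ))]
    exact setIntegral_union (Set.Ioc_disjoint_Ioi le_rfl) measurableSet_Ioi hf1 hf2
  -- piece 1 bound
  have hmaj1' : IntegrableOn (fun x : ℝ => 2 * C₀ * r * x ^ (1 - β)) (Set.Ioc 0 1) := by
    have := intervalIntegral.intervalIntegrable_rpow' (a := 0) (b := 1)
      (r := 1 - β) (by linarith)
    rw [intervalIntegrable_iff_integrableOn_Ioc_of_le zero_le_one] at this
    exact this.const_mul _
  have hval1 : (∫ x in Set.Ioc (0:ℝ) 1, x ^ (1 - β)) = 1 / (2 - β) := by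
    rw [← intervalIntegral.integral_of_le zero_le_one]
    rw [integral_rpow (Or.inl (by linarith))]
    rw [Real.one_rpow, Real.zero_rpow (by linarith)]
    norm_num
    rw [show (1:ℝ) - β + 1 = 2 - β by ring]
  have hb1 : ‖∫ x in Set.Ioc (0:ℝ) 1, f x‖ ≤ 2 * C₀ / (2 - β) * r ^ (q - 1) := by
    have step : ‖∫ x in Set.Ioc (0:ℝ) 1, f x‖
        ≤ ∫ x in Set.Ioc (0:ℝ) 1, 2 * C₀ * r * x ^ (1 - β) := by
      apply norm_integral_le_of_norm_le hmaj1'.integrable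
      rw [ae_restrict_iff' measurableSet_Ioc]
      filter_upwards with x hx
      calc ‖f x‖ ≤ 2 * min 1 (r * x) * ‖H x‖ := hnorm x hx.1
        _ ≤ 2 * (r * x) * (C₀ * x ^ (-β)) := by
            apply mul_le_mul
            · exact mul_le_mul_of_nonneg_left (min_le_right _ _) (by norm_num)
            · exact hH0 x hx.1 hx.2
            · exact norm_nonneg _
            · exact mul_nonneg (by norm_num) (mul_nonneg hr.le hx.1.le)
        _ = 2 * C₀ * r * (x * x ^ (-β)) := by ring
        _ = 2 * C₀ * r * x ^ (1 - β) := by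
            rw [show (1:ℝ) - β = 1 + (-β) by ring, Real.rpow_add hx.1, Real.rpow_one]
    rw [integral_const_mul, hval1] at step
    calc ‖∫ x in Set.Ioc (0:ℝ) 1, f x‖ ≤ 2 * C₀ * r * (1 / (2 - β)) := step
      _ = 2 * C₀ / (2 - β) * r := by ring
      _ ≤ 2 * C₀ / (2 - β) * r ^ (q - 1) := by
          apply mul_le_mul_of_nonneg_left hrq (by positivity)
  -- piece 2: substitution
  have hcomp : IntegrableOn (fun x : ℝ => g (r * x)) (Set.Ioi 0) := by
    have := (integrableOn_Ioi_comp_mul_left_iff g 0 hr).mpr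
    rw [mul_zero] at this
    exact this (minK_integrable q hq1 hq2)
  have hptwise : ∀ x ∈ Set.Ioi (0:ℝ),
      min 1 (r * x) * x ^ (-q) = r ^ q * g (r * x) := by
    intro x hx
    rw [hgdef]
    simp only []
    rw [Real.mul_rpow hr.le (le_of_lt hx)]
    rw [show r ^ q * (min 1 (r * x) * (r ^ (-q) * x ^ (-q)))
        = (r ^ q * r ^ (-q)) * (min 1 (r * x) * x ^ (-q)) by ring]
    rw [← Real.rpow_add hr, add_neg_cancel, Real.rpow_zero, one_mul]
  have hg2' : IntegrableOn (fun x : ℝ => min 1 (r * x) * x ^ (-q)) (Set.Ioi 0) := by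
    have hbase : IntegrableOn (fun x : ℝ => r ^ q * g (r * x)) (Set.Ioi 0) :=
      hcomp.const_mul (r ^ q)
    apply hbase.congr_fun _ measurableSet_Ioi
    intro x hx
    exact (hptwise x hx).symm
  have hchange : (∫ x in Set.Ioi (0:ℝ), min 1 (r * x) * x ^ (-q)) = r ^ (q - 1) * K := by
    rw [setIntegral_congr_fun measurableSet_Ioi hptwise, integral_const_mul,
      integral_comp_mul_left_Ioi g 0 hr, mul_zero, smul_eq_mul, ← hKdef]
    rw [show r ^ q * (r⁻¹ * K) = (r ^ q * r⁻¹) * K by ring]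
    congr 1
    rw [← Real.rpow_neg_one r, ← Real.rpow_add hr, show q + -1 = q - 1 by ring]
  have hb2 : ‖∫ x in Set.Ioi (1:ℝ), f x‖ ≤ 2 * C₀ * K * r ^ (q - 1) := by
    have step : ‖∫ x in Set.Ioi (1:ℝ), f x‖
        ≤ ∫ x in Set.Ioi (1:ℝ), 2 * C₀ * (min 1 (r * x) * x ^ (-q)) := by
      have hgi1 : IntegrableOn (fun x : ℝ => 2 * C₀ * (min 1 (r * x) * x ^ (-q)))
          (Set.Ioi 1) := by
        have : IntegrableOn (fun x : ℝ => 2 * C₀ * (min 1 (r * x) * x ^ (-q)))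
            (Set.Ioi 0) := hg2'.const_mul _
        exact this.mono_set (Set.Ioi_subset_Ioi zero_le_one)
      apply norm_integral_le_of_norm_le hgi1
      rw [ae_restrict_iff' measurableSet_Ioi]
      filter_upwards with x hx
      calc ‖f x‖ ≤ 2 * min 1 (r * x) * ‖H x‖ := hnorm x (lt_trans one_pos hx)
        _ ≤ 2 * min 1 (r * x) * (C₀ * x ^ (-q)) := by
            apply mul_le_mul_of_nonneg_left (hH1 x hx.le)
            have h0x : (0:ℝ) ≤ x := le_of_lt (lt_trans one_pos (Set.mem_Ioi.mp hx))
            have : (0:ℝ) ≤ min 1 (r * x) := le_min zero_le_one (mul_nonneg hr.le h0x)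
            positivity
        _ = 2 * C₀ * (min 1 (r * x) * x ^ (-q)) := by ring
    have mono : (∫ x in Set.Ioi (1:ℝ), 2 * C₀ * (min 1 (r * x) * x ^ (-q)))
        ≤ ∫ x in Set.Ioi (0:ℝ), 2 * C₀ * (min 1 (r * x) * x ^ (-q)) := by
      have hgi0 : IntegrableOn (fun x : ℝ => 2 * C₀ * (min 1 (r * x) * x ^ (-q)))
          (Set.Ioi 0) := hg2'.const_mul _
      apply setIntegral_mono_set hgi0
      · filter_upwards [ae_restrict_mem measurableSet_Ioi] with x hx
        have h1 : (0:ℝ) ≤ min 1 (r * x) := le_min zero_le_one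
          (mul_nonneg hr.le (le_of_lt hx))
        have h2 : (0:ℝ) ≤ x ^ (-q) := Real.rpow_nonneg (le_of_lt hx) _
        positivity
      · exact HasSubset.Subset.eventuallyLE (Set.Ioi_subset_Ioi zero_le_one)
    rw [integral_const_mul, integral_const_mul, hchange] at mono
    calc ‖∫ x in Set.Ioi (1:ℝ), f x‖
        ≤ ∫ x in Set.Ioi (1:ℝ), 2 * C₀ * (min 1 (r * x) * x ^ (-q)) := step
      _ = 2 * C₀ * ∫ (a : ℝ) in Set.Ioi (1:ℝ), min 1 (r * a) * a ^ (-q) :=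
          integral_const_mul _ _
      _ ≤ 2 * C₀ * (r ^ (q - 1) * K) := mono
      _ = 2 * C₀ * K * r ^ (q - 1) := by ring
  calc ‖∫ x in Set.Ioi (0:ℝ), f x‖
      = ‖(∫ x in Set.Ioc (0:ℝ) 1, f x) + ∫ x in Set.Ioi (1:ℝ), f x‖ := by rw [hsplit]
    _ ≤ ‖∫ x in Set.Ioc (0:ℝ) 1, f x‖ + ‖∫ x in Set.Ioi (1:ℝ), f x‖ := norm_add_le _ _
    _ ≤ 2 * C₀ / (2 - β) * r ^ (q - 1) + 2 * C₀ * K * r ^ (q - 1) := add_le_add hb1 hb2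
    _ ≤ (2 * C₀ / (2 - β) + 2 * C₀ * K + 1) * r ^ (q - 1) := by nlinarith
end
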